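/- Let A, B : ℝ⁴ → ℂ⁴ be twice continuously differentiable solutions of the source-free Maxwell equation ∂^μ(∂_μ A_ν − ∂_ν A_μ) = 0 and ∂^μ(∂_μ B_ν − ∂_ν B_μ) = 0. Define the current j_ν = −i[A_μ* ∂_ν B^μ − A_ν* ∂_μ B^μ − (∂_ν A_μ*) B^μ + (∂^μ A_μ*) B_ν]. Then ∂^ν j_ν = 0 identically on ℝ⁴. -/

import Mathlib

/-- Partial derivative in direction `μ` of a function on ℝ⁴. -/
noncomputable def pd (f : (Fin 4 → ℝ) → ℂ) (μ : Fin 4) : (Fin 4 → ℝ) → ℂ :=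
  fun x => fderiv ℝ f x (Pi.single μ 1)

/-- Metric signs of the Minkowski metric diag(1,−1,−1,−1), as complex numbers. -/
def eta (μ : Fin 4) : ℂ := if μ = 0 then 1 else -1

/-- The Gupta–Bleuler current
`j_ν = −i[A_μ* ∂_ν B^μ − A_ν* ∂_μ B^μ − (∂_ν A_μ*) B^μ + (∂^μ A_μ*) B_ν]`. -/
noncomputable def gbCurrent (A B : (Fin 4 → ℝ) → Fin 4 → ℂ) (ν : Fin 4)
    (x : Fin 4 → ℝ) : ℂ :=
  -Complex.I *
    ((∑ μ : Fin 4, eta μ * (starRingEnd ℂ) (A x μ) * pd (fun y => B y μ) ν x)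
      - (starRingEnd ℂ) (A x ν) * (∑ μ : Fin 4, eta μ * pd (fun y => B y μ) μ x)
      - (∑ μ : Fin 4, eta μ * pd (fun y => (starRingEnd ℂ) (A y μ)) ν x * B x μ)
      + (∑ μ : Fin 4, eta μ * pd (fun y => (starRingEnd ℂ) (A y μ)) μ x) * B x ν)

section helpers
variable {f g : (Fin 4 → ℝ) → ℂ} {x : Fin 4 → ℝ} {μ ν : Fin 4}

lemma pd_add (hf : DifferentiableAt ℝ f x) (hg : DifferentiableAt ℝ g x) :
    pd (fun y => f y + g y) μ x = pd f μ x + pd g μ x := by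
  simp [pd, fderiv_fun_add hf hg]

lemma pd_sub (hf : DifferentiableAt ℝ f x) (hg : DifferentiableAt ℝ g x) :
    pd (fun y => f y - g y) μ x = pd f μ x - pd g μ x := by
  simp [pd, fderiv_fun_sub hf hg]

lemma pd_mul (hf : DifferentiableAt ℝ f x) (hg : DifferentiableAt ℝ g x) :
    pd (fun y => f y * g y) μ x = pd f μ x * g x + f x * pd g μ x := by
  simp [pd, fderiv_fun_mul hf hg]; ring

lemma pd_const_mul (hf : DifferentiableAt ℝ f x) (c : ℂ) :
    pd (fun y => c * f y) μ x = c * pd f μ x := by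
  simp [pd, fderiv_const_mul hf c]

lemma pd_sum {n : ℕ} (F : Fin n → (Fin 4 → ℝ) → ℂ)
    (hF : ∀ i, DifferentiableAt ℝ (F i) x) :
    pd (fun y => ∑ i, F i y) μ x = ∑ i, pd (F i) μ x := by
  simp [pd, fderiv_fun_sum (fun i _ => hF i)]

lemma pd_conj (f : (Fin 4 → ℝ) → ℂ) (μ : Fin 4) (x : Fin 4 → ℝ) :
    pd (fun y => (starRingEnd ℂ) (f y)) μ x = (starRingEnd ℂ) (pd f μ x) := by
  have h : (fun y => (starRingEnd ℂ) (f y)) = (Complex.conjCLE : ℂ ≃L[ℝ] ℂ) ∘ f := rfl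
  rw [pd, h, Complex.conjCLE.comp_fderiv]
  rfl

lemma contDiff_conj (hf : ContDiff ℝ 2 f) :
    ContDiff ℝ 2 (fun y => (starRingEnd ℂ) (f y)) :=
  ((Complex.conjCLE : ℂ ≃L[ℝ] ℂ).toContinuousLinearMap.contDiff).comp hf

lemma contDiff_pd (hf : ContDiff ℝ 2 f) (μ : Fin 4) : ContDiff ℝ 1 (pd f μ) :=
  (hf.fderiv_right (le_refl _)).clm_apply contDiff_const

lemma pd_comm (hf : ContDiff ℝ 2 f) (μ ν : Fin 4) (x : Fin 4 → ℝ) :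
    pd (pd f μ) ν x = pd (pd f ν) μ x := by
  have hsymm : IsSymmSndFDerivAt ℝ f x :=
    (hf.contDiffAt).isSymmSndFDerivAt (by norm_num)
  have hd : DifferentiableAt ℝ (fderiv ℝ f) x :=
    ((hf.fderiv_right (m := 1) (le_refl _)).differentiable (by norm_num)).differentiableAt
  have key : ∀ σ τ : Fin 4, pd (pd f σ) τ x
      = fderiv ℝ (fderiv ℝ f) x (Pi.single τ 1) (Pi.single σ 1) := by
    intro σ τ
    have h : pd f σ = fun y => (fderiv ℝ f y) (Pi.single σ 1) := rfl
    rw [pd, h, fderiv_clm_apply hd (differentiableAt_const _)]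
    simp
  rw [key, key, hsymm.eq]

end helpers

lemma main_calc (a b : Fin 4 → (Fin 4 → ℝ) → ℂ)
    (ha : ∀ μ, ContDiff ℝ 2 (a μ)) (hb : ∀ μ, ContDiff ℝ 2 (b μ))
    (hMa : ∀ (x : Fin 4 → ℝ) (ν : Fin 4),
      ∑ μ : Fin 4, eta μ * (pd (pd (a ν) μ) μ x - pd (pd (a μ) ν) μ x) = 0)
    (hMb : ∀ (x : Fin 4 → ℝ) (ν : Fin 4),
      ∑ μ : Fin 4, eta μ * (pd (pd (b ν) μ) μ x - pd (pd (b μ) ν) μ x) = 0)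
    (x : Fin 4 → ℝ) :
    ∑ ν : Fin 4, eta ν * pd (fun y => -Complex.I *
      ((∑ μ : Fin 4, eta μ * a μ y * pd (b μ) ν y)
        - a ν y * (∑ μ : Fin 4, eta μ * pd (b μ) μ y)
        - (∑ μ : Fin 4, eta μ * pd (a μ) ν y * b μ y)
        + (∑ μ : Fin 4, eta μ * pd (a μ) μ y) * b ν y)) ν x = 0 := by
  have da : ∀ μ, DifferentiableAt ℝ (a μ) x :=
    fun μ => ((ha μ).differentiable (by norm_num)).differentiableAt
  have db : ∀ μ, DifferentiableAt ℝ (b μ) x :=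
    fun μ => ((hb μ).differentiable (by norm_num)).differentiableAt
  have dpa : ∀ μ ν, DifferentiableAt ℝ (pd (a μ) ν) x :=
    fun μ ν => ((contDiff_pd (ha μ) ν).differentiable (by norm_num)).differentiableAt
  have dpb : ∀ μ ν, DifferentiableAt ℝ (pd (b μ) ν) x :=
    fun μ ν => ((contDiff_pd (hb μ) ν).differentiable (by norm_num)).differentiableAt
  -- box lemmas: derivative of divergence equals d'Alembertian via Maxwell
  have hboxb : ∀ ν : Fin 4, pd (fun y => ∑ μ : Fin 4, eta μ * pd (b μ) μ y) ν x
      = ∑ μ : Fin 4, eta μ * pd (pd (b ν) μ) μ x := by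
    intro ν
    rw [pd_sum (fun μ y => eta μ * pd (b μ) μ y) (fun μ => (dpb μ μ).const_mul _)]
    have h1 : ∀ μ : Fin 4, pd (fun y => eta μ * pd (b μ) μ y) ν x
        = eta μ * pd (pd (b μ) ν) μ x := by
      intro μ; rw [pd_const_mul (dpb μ μ) (eta μ), pd_comm (hb μ)]
    rw [Finset.sum_congr rfl (fun μ _ => h1 μ)]
    have h2 := hMb x ν
    simp only [mul_sub, Finset.sum_sub_distrib, sub_eq_zero] at h2
    exact h2.symm
  have hboxa : ∀ ν : Fin 4, pd (fun y => ∑ μ : Fin 4, eta μ * pd (a μ) μ y) ν x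
      = ∑ μ : Fin 4, eta μ * pd (pd (a ν) μ) μ x := by
    intro ν
    rw [pd_sum (fun μ y => eta μ * pd (a μ) μ y) (fun μ => (dpa μ μ).const_mul _)]
    have h1 : ∀ μ : Fin 4, pd (fun y => eta μ * pd (a μ) μ y) ν x
        = eta μ * pd (pd (a μ) ν) μ x := by
      intro μ; rw [pd_const_mul (dpa μ μ) (eta μ), pd_comm (ha μ)]
    rw [Finset.sum_congr rfl (fun μ _ => h1 μ)]
    have h2 := hMa x ν
    simp only [mul_sub, Finset.sum_sub_distrib, sub_eq_zero] at h2
    exact h2.symm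
  have dDa : DifferentiableAt ℝ (fun y => ∑ μ : Fin 4, eta μ * pd (a μ) μ y) x :=
    DifferentiableAt.fun_sum fun μ _ => (dpa μ μ).const_mul _
  have dDb : DifferentiableAt ℝ (fun y => ∑ μ : Fin 4, eta μ * pd (b μ) μ y) x :=
    DifferentiableAt.fun_sum fun μ _ => (dpb μ μ).const_mul _
  -- derivatives of the four blocks
  have hT1 : ∀ ν : Fin 4, pd (fun y => ∑ μ : Fin 4, eta μ * a μ y * pd (b μ) ν y) ν x
      = ∑ μ : Fin 4, (eta μ * pd (a μ) ν x * pd (b μ) ν x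
          + eta μ * a μ x * pd (pd (b μ) ν) ν x) := by
    intro ν
    rw [pd_sum (fun μ y => eta μ * a μ y * pd (b μ) ν y)
      (fun μ => ((da μ).const_mul _).mul (dpb μ ν))]
    refine Finset.sum_congr rfl fun μ _ => ?_
    rw [pd_mul ((da μ).const_mul (eta μ)) (dpb μ ν), pd_const_mul (da μ) (eta μ)]
  have hT3 : ∀ ν : Fin 4, pd (fun y => ∑ μ : Fin 4, eta μ * pd (a μ) ν y * b μ y) ν x
      = ∑ μ : Fin 4, (eta μ * pd (pd (a μ) ν) ν x * b μ x
          + eta μ * pd (a μ) ν x * pd (b μ) ν x) := by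
    intro ν
    rw [pd_sum (fun μ y => eta μ * pd (a μ) ν y * b μ y)
      (fun μ => ((dpa μ ν).const_mul _).mul (db μ))]
    refine Finset.sum_congr rfl fun μ _ => ?_
    rw [pd_mul ((dpa μ ν).const_mul (eta μ)) (db μ), pd_const_mul (dpa μ ν) (eta μ)]
  have hT2 : ∀ ν : Fin 4,
      pd (fun y => a ν y * (∑ μ : Fin 4, eta μ * pd (b μ) μ y)) ν x
      = pd (a ν) ν x * (∑ μ : Fin 4, eta μ * pd (b μ) μ x)
        + a ν x * (∑ μ : Fin 4, eta μ * pd (pd (b ν) μ) μ x) := by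
    intro ν
    rw [pd_mul (da ν) dDb, hboxb ν]
  have hT4 : ∀ ν : Fin 4,
      pd (fun y => (∑ μ : Fin 4, eta μ * pd (a μ) μ y) * b ν y) ν x
      = (∑ μ : Fin 4, eta μ * pd (pd (a ν) μ) μ x) * b ν x
        + (∑ μ : Fin 4, eta μ * pd (a μ) μ x) * pd (b ν) ν x := by
    intro ν
    rw [pd_mul dDa (db ν), hboxa ν]
  have hexp : ∀ ν : Fin 4, pd (fun y => -Complex.I *
      ((∑ μ : Fin 4, eta μ * a μ y * pd (b μ) ν y)
        - a ν y * (∑ μ : Fin 4, eta μ * pd (b μ) μ y)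
        - (∑ μ : Fin 4, eta μ * pd (a μ) ν y * b μ y)
        + (∑ μ : Fin 4, eta μ * pd (a μ) μ y) * b ν y)) ν x
      = -Complex.I *
        ((∑ μ : Fin 4, (eta μ * pd (a μ) ν x * pd (b μ) ν x
            + eta μ * a μ x * pd (pd (b μ) ν) ν x))
          - (pd (a ν) ν x * (∑ μ : Fin 4, eta μ * pd (b μ) μ x)
            + a ν x * (∑ μ : Fin 4, eta μ * pd (pd (b ν) μ) μ x))
          - (∑ μ : Fin 4, (eta μ * pd (pd (a μ) ν) ν x * b μ x
            + eta μ * pd (a μ) ν x * pd (b μ) ν x))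
          + ((∑ μ : Fin 4, eta μ * pd (pd (a ν) μ) μ x) * b ν x
            + (∑ μ : Fin 4, eta μ * pd (a μ) μ x) * pd (b ν) ν x)) := by
    intro ν
    have d1 : DifferentiableAt ℝ (fun y => ∑ μ : Fin 4, eta μ * a μ y * pd (b μ) ν y) x :=
      DifferentiableAt.fun_sum fun μ _ => ((da μ).const_mul _).mul (dpb μ ν)
    have d2 : DifferentiableAt ℝ
        (fun y => a ν y * (∑ μ : Fin 4, eta μ * pd (b μ) μ y)) x := (da ν).mul dDb
    have d3 : DifferentiableAt ℝ (fun y => ∑ μ : Fin 4, eta μ * pd (a μ) ν y * b μ y) x :=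
      DifferentiableAt.fun_sum fun μ _ => ((dpa μ ν).const_mul _).mul (db μ)
    have d4 : DifferentiableAt ℝ
        (fun y => (∑ μ : Fin 4, eta μ * pd (a μ) μ y) * b ν y) x := dDa.mul (db ν)
    rw [pd_const_mul (((d1.fun_sub d2).fun_sub d3).fun_add d4) (-Complex.I),
      pd_add ((d1.fun_sub d2).fun_sub d3) d4, pd_sub (d1.fun_sub d2) d3, pd_sub d1 d2,
      hT1 ν, hT2 ν, hT3 ν, hT4 ν]
  calc ∑ ν : Fin 4, eta ν * pd (fun y => -Complex.I *
      ((∑ μ : Fin 4, eta μ * a μ y * pd (b μ) ν y)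
        - a ν y * (∑ μ : Fin 4, eta μ * pd (b μ) μ y)
        - (∑ μ : Fin 4, eta μ * pd (a μ) ν y * b μ y)
        + (∑ μ : Fin 4, eta μ * pd (a μ) μ y) * b ν y)) ν x
      = ∑ ν : Fin 4, eta ν * (-Complex.I *
        ((∑ μ : Fin 4, (eta μ * pd (a μ) ν x * pd (b μ) ν x
            + eta μ * a μ x * pd (pd (b μ) ν) ν x))
          - (pd (a ν) ν x * (∑ μ : Fin 4, eta μ * pd (b μ) μ x)
            + a ν x * (∑ μ : Fin 4, eta μ * pd (pd (b ν) μ) μ x))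
          - (∑ μ : Fin 4, (eta μ * pd (pd (a μ) ν) ν x * b μ x
            + eta μ * pd (a μ) ν x * pd (b μ) ν x))
          + ((∑ μ : Fin 4, eta μ * pd (pd (a ν) μ) μ x) * b ν x
            + (∑ μ : Fin 4, eta μ * pd (a μ) μ x) * pd (b ν) ν x))) :=
      Finset.sum_congr rfl fun ν _ => by rw [hexp ν]
    _ = 0 := by
      simp only [Fin.sum_univ_four]
      ring

lemma eta_conj (μ : Fin 4) : (starRingEnd ℂ) (eta μ) = eta μ := by
  unfold eta; split <;> simp

lemma pd_pd_conj (f : (Fin 4 → ℝ) → ℂ) (σ τ : Fin 4) (x : Fin 4 → ℝ) :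
    pd (pd (fun y => (starRingEnd ℂ) (f y)) σ) τ x
      = (starRingEnd ℂ) (pd (pd f σ) τ x) := by
  have h : pd (fun y => (starRingEnd ℂ) (f y)) σ
      = fun z => (starRingEnd ℂ) (pd f σ z) := funext fun z => pd_conj f σ z
  rw [h, pd_conj]


/-- For C² solutions `A`, `B` of the source-free Maxwell equation
`∂^μ(∂_μ A_ν − ∂_ν A_μ) = 0`, the current `j_ν` is divergence-free:
`∂^ν j_ν = 0` on all of ℝ⁴. -/
theorem gb_current_divergence_free
    (A B : (Fin 4 → ℝ) → Fin 4 → ℂ)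
    (hA : ∀ ν : Fin 4, ContDiff ℝ 2 (fun x => A x ν))
    (hB : ∀ ν : Fin 4, ContDiff ℝ 2 (fun x => B x ν))
    (hMaxA : ∀ (x : Fin 4 → ℝ) (ν : Fin 4),
      ∑ μ : Fin 4, eta μ *
        (pd (pd (fun y => A y ν) μ) μ x - pd (pd (fun y => A y μ) ν) μ x) = 0)
    (hMaxB : ∀ (x : Fin 4 → ℝ) (ν : Fin 4),
      ∑ μ : Fin 4, eta μ *
        (pd (pd (fun y => B y ν) μ) μ x - pd (pd (fun y => B y μ) ν) μ x) = 0) :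
    ∀ x : Fin 4 → ℝ,
      ∑ ν : Fin 4, eta ν * pd (gbCurrent A B ν) ν x = 0 := by
  intro x
  have hMa : ∀ (x : Fin 4 → ℝ) (ν : Fin 4),
      ∑ μ : Fin 4, eta μ *
        (pd (pd (fun y => (starRingEnd ℂ) (A y ν)) μ) μ x
          - pd (pd (fun y => (starRingEnd ℂ) (A y μ)) ν) μ x) = 0 := by
    intro x ν
    have h : ∑ μ : Fin 4, eta μ *
        (pd (pd (fun y => (starRingEnd ℂ) (A y ν)) μ) μ x
          - pd (pd (fun y => (starRingEnd ℂ) (A y μ)) ν) μ x)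
        = (starRingEnd ℂ) (∑ μ : Fin 4, eta μ *
          (pd (pd (fun y => A y ν) μ) μ x - pd (pd (fun y => A y μ) ν) μ x)) := by
      rw [map_sum]
      refine Finset.sum_congr rfl fun μ _ => ?_
      rw [map_mul, map_sub, eta_conj, pd_pd_conj, pd_pd_conj]
    rw [h, hMaxA x ν, map_zero]
  exact main_calc (fun μ y => (starRingEnd ℂ) (A y μ)) (fun μ y => B y μ)
    (fun μ => contDiff_conj (hA μ)) hB hMa hMaxB x
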